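/- arXiv:2104.12974 — 3 statements merged into one kernel-verified Lean document; each statement's English description precedes it below -/
import Mathlib

section
/- Let p ≥ 1 and q ≥ 2 be integers and set m := p + q − 1. Then for every integer j with 1 ≤ j ≤ m, one has C(2m−j−1, m−1) = A_{p,q−1}(j) + B_{p,q−1}(j) + C_{p,q−1}(j). -/
open Finset

/-- Binomial coefficient on integers: `C a b = 0` whenever `a < b` or `a < 0`,
    and otherwise the usual binomial coefficient. -/
def intChoose (a b : ℤ) : ℤ :=
  if a < b ∨ a < 0 then 0 else (a.toNat.choose b.toNat : ℤ)

/-- `F p s = C (2p − s − 1) (p − 1)`. -/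
def F (p s : ℤ) : ℤ := intChoose (2 * p - s - 1) (p - 1)

/-- `P s t = C (s + t − 2) (s − 1)` if `s, t ≥ 1`, and `0` otherwise. -/
def P (s t : ℤ) : ℤ :=
  if 1 ≤ s ∧ 1 ≤ t then intChoose (s + t - 2) (s - 1) else 0

/-- `A p q j = ∑_{s=1}^{p} ∑_{t=1}^{q, s+t=j} F_p(s)·F_q(t)`. -/
noncomputable def A (p q j : ℤ) : ℤ :=
  ∑ s ∈ Finset.Icc (1 : ℤ) p, ∑ t ∈ Finset.Icc (1 : ℤ) q,
    if s + t = j then F p s * F q t else 0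

/-- `B p q j = ∑_{s=1}^{p} ∑_{t=1}^{q} F_p(s)·F_q(t)·P(s−j+1, t)`. -/
noncomputable def B (p q j : ℤ) : ℤ :=
  ∑ s ∈ Finset.Icc (1 : ℤ) p, ∑ t ∈ Finset.Icc (1 : ℤ) q,
    F p s * F q t * P (s - j + 1) t

/-- `Cc p q j = ∑_{s=1}^{p} ∑_{t=j}^{q} F_p(s)·F_q(t)·P(s, t−j+1)`. -/
noncomputable def Cc (p q j : ℤ) : ℤ :=
  ∑ s ∈ Finset.Icc (1 : ℤ) p, ∑ t ∈ Finset.Icc j q,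
    F p s * F q t * P s (t - j + 1)

/-! ### Auxiliary natural-number binomial identities -/

lemma hockey (b n : ℕ) : ∑ i ∈ range (n+1), (b+i).choose b = (b+n+1).choose (b+1) := by
  induction n with
  | zero => simp
  | succ n ih =>
    rw [Finset.sum_range_succ, ih, show b+(n+1) = b+n+1 by omega,
        Nat.choose_succ_succ' (b+n+1) b]
    omega

lemma choose_symm' {n k l : ℕ} (h : k + l = n) : n.choose k = n.choose l := by
  subst h
  rw [← Nat.choose_symm (show k ≤ k + l by omega), show k + l - k = l by omega]

/-- Parallel-summation form of the Vandermonde convolution. -/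
lemma vand (a b n : ℕ) :
    ∑ k ∈ range (n+1), (a+k).choose k * (b+(n-k)).choose (n-k) = (a+b+n+1).choose n := by
  induction a generalizing n with
  | zero =>
    have h1 : ∀ k ∈ range (n+1), (0+k).choose k * (b+(n-k)).choose (n-k)
        = (fun j => (b+j).choose j) (n - k) := by
      intro k hk; simp [Nat.choose_self]
    rw [Finset.sum_congr rfl h1]
    have h2 : ∑ k ∈ range (n+1), (fun j => (b+j).choose j) (n - k)
        = ∑ j ∈ range (n+1), (b+j).choose j := by
      rw [← Finset.sum_range_reflect (fun j => (b+j).choose j) (n+1)]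
      apply Finset.sum_congr rfl
      intro k hk
      simp only [mem_range] at hk
      congr 1
    rw [h2]
    have h3 : ∀ j ∈ range (n+1), (b+j).choose j = (b+j).choose b := by
      intro j hj
      exact choose_symm' (by omega)
    rw [Finset.sum_congr rfl h3, hockey]
    simp only [Nat.zero_add]
    exact choose_symm' (by omega)
  | succ a iha =>
    induction n with
    | zero => simp
    | succ n ihn =>
      rw [Finset.sum_range_succ' (fun k => (a+1+k).choose k * (b+(n+1-k)).choose (n+1-k)) (n+1)]
      have h1 : ∀ k ∈ range (n+1),
          (a+1+(k+1)).choose (k+1) * (b+(n+1-(k+1))).choose (n+1-(k+1))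
          = (a+(k+1)).choose (k+1) * (b+(n-k)).choose (n-k)
            + (a+1+k).choose k * (b+(n-k)).choose (n-k) := by
        intro k hk
        rw [show a+1+(k+1) = (a+(k+1))+1 by omega, Nat.choose_succ_succ' (a+(k+1)) k,
            show n+1-(k+1) = n-k by omega, show a+1+k = a+(k+1) by omega]
        ring
      rw [Finset.sum_congr rfl h1, Finset.sum_add_distrib, ihn]
      have h2 : ∑ k ∈ range (n+1), (a+(k+1)).choose (k+1) * (b+(n-k)).choose (n-k)
            + (a+1+0).choose 0 * (b+(n+1-0)).choose (n+1-0)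
          = ∑ k ∈ range (n+2), (a+k).choose k * (b+(n+1-k)).choose (n+1-k) := by
        rw [Finset.sum_range_succ' (fun k => (a+k).choose k * (b+(n+1-k)).choose (n+1-k)) (n+1)]
        congr 1
        · apply Finset.sum_congr rfl
          intro k hk
          rw [show n+1-(k+1) = n-k by omega]
        · simp
      rw [add_right_comm, h2, iha (n+1)]
      rw [show a+b+(n+1)+1 = a+b+n+2 by omega, show a+1+b+n+1 = a+b+n+2 by omega,
          show a+1+b+(n+1)+1 = (a+b+n+2)+1 by omega, Nat.choose_succ_succ' (a+b+n+2) n]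
      omega

lemma B1 (a e : ℕ) :
    ∑ k ∈ range (a+1), (a+k).choose a * (e+a+1-k).choose e
      = ∑ i ∈ range (e+1), (2*a+1+i).choose a := by
  induction e with
  | zero =>
    rw [Finset.sum_range_one, show 2*a+1+0 = a+a+1 by omega,
        show (a+a+1).choose a = (a+a+1).choose (a+1) from choose_symm' (by omega), ← hockey a a]
    apply Finset.sum_congr rfl
    intro k hk
    simp only [mem_range] at hk
    rw [show 0+a+1-k = a+1-k by omega, Nat.choose_zero_right, mul_one]
  | succ e ih =>
    have h1 : ∀ k ∈ range (a+1),
        (a+k).choose a * (e+1+a+1-k).choose (e+1)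
        = (a+k).choose a * (e+a+1-k).choose e + (a+k).choose a * (e+a+1-k).choose (e+1) := by
      intro k hk
      simp only [mem_range] at hk
      rw [show e+1+a+1-k = (e+a+1-k)+1 by omega, Nat.choose_succ_succ' (e+a+1-k) e]
      ring
    have h2 : ∀ k ∈ range (a+1),
        (a+k).choose a * (e+a+1-k).choose (e+1)
        = (a+k).choose k * ((e+1)+(a-k)).choose (a-k) := by
      intro k hk
      simp only [mem_range] at hk
      rw [show (a+k).choose a = (a+k).choose k from choose_symm' (by omega),
          show e+a+1-k = (e+1)+(a-k) by omega]
      congr 1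
      exact choose_symm' (by omega)
    rw [Finset.sum_congr rfl h1, Finset.sum_add_distrib, ih, Finset.sum_congr rfl h2,
        vand a (e+1) a, show a+(e+1)+a+1 = 2*a+1+(e+1) by omega,
        ← Finset.sum_range_succ (fun i => (2*a+1+i).choose a) (e+1)]

/-- The key partial-sum exchange identity. -/
lemma Mlem (a c e : ℕ) :
    ∑ k ∈ range (a+1), (a+k).choose a * (e+a+c+1-k).choose e
      = ∑ i ∈ range (e+1), (2*a+1+i).choose a * (c+e-i).choose c := by
  induction c generalizing e with
  | zero =>
    have h0 : ∀ k ∈ range (a+1), (a+k).choose a * (e+a+0+1-k).choose e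
        = (a+k).choose a * (e+a+1-k).choose e := by
      intro k hk
      rw [show e+a+0+1-k = e+a+1-k by omega]
    have h0' : ∀ i ∈ range (e+1), (2*a+1+i).choose a * (0+e-i).choose 0
        = (2*a+1+i).choose a := by
      intro i hi; simp
    rw [Finset.sum_congr rfl h0, Finset.sum_congr rfl h0', B1 a e]
  | succ c ihc =>
    induction e with
    | zero =>
      have h1 : ∀ k ∈ range (a+1), (a+k).choose a * (0+a+(c+1)+1-k).choose 0
          = (a+k).choose a := by
        intro k hk; simp
      rw [Finset.sum_congr rfl h1, hockey a a, Finset.sum_range_one]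
      rw [show (c+1)+0-0 = c+1 by omega, Nat.choose_self, mul_one,
          show 2*a+1+0 = a+a+1 by omega]
      exact choose_symm' (by omega)
    | succ e ihe =>
      have hL : ∀ k ∈ range (a+1),
          (a+k).choose a * ((e+1)+a+(c+1)+1-k).choose (e+1)
          = (a+k).choose a * (e+a+(c+1)+1-k).choose e
            + (a+k).choose a * ((e+1)+a+c+1-k).choose (e+1) := by
        intro k hk
        simp only [mem_range] at hk
        rw [show (e+1)+a+(c+1)+1-k = (e+a+(c+1)+1-k)+1 by omega,
            Nat.choose_succ_succ' (e+a+(c+1)+1-k) e,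
            show (e+1)+a+c+1-k = e+a+(c+1)+1-k by omega]
        ring
      rw [Finset.sum_congr rfl hL, Finset.sum_add_distrib, ihe, ihc (e+1)]
      have hR : ∀ i ∈ range (e+2),
          (2*a+1+i).choose a * ((c+1)+(e+1)-i).choose (c+1)
          = (2*a+1+i).choose a * (c+(e+1)-i).choose c
            + (2*a+1+i).choose a * (if i ≤ e then ((c+1)+e-i).choose (c+1) else 0) := by
        intro i hi
        simp only [mem_range] at hi
        by_cases h : i ≤ e
        · rw [if_pos h, show (c+1)+(e+1)-i = (c+(e+1)-i)+1 by omega,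
              Nat.choose_succ_succ' (c+(e+1)-i) c, show (c+1)+e-i = c+(e+1)-i by omega]
          ring
        · have hie : i = e+1 := by omega
          rw [if_neg h, hie]
          rw [show (c+1)+(e+1)-(e+1) = c+1 by omega, show c+(e+1)-(e+1) = c by omega]
          simp
      have h3 : ∑ i ∈ range (e+2),
            (2*a+1+i).choose a * (if i ≤ e then ((c+1)+e-i).choose (c+1) else 0)
          = ∑ i ∈ range (e+1), (2*a+1+i).choose a * ((c+1)+e-i).choose (c+1) := by
        rw [Finset.sum_range_succ
            (fun i => (2*a+1+i).choose a * (if i ≤ e then ((c+1)+e-i).choose (c+1) else 0)) (e+1)]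
        rw [if_neg (by omega : ¬ e+1 ≤ e), mul_zero, add_zero]
        apply Finset.sum_congr rfl
        intro i hi
        simp only [mem_range] at hi
        rw [if_pos (by omega : i ≤ e)]
      rw [Finset.sum_congr rfl hR, Finset.sum_add_distrib, h3]
      simp only [show e+1+1 = e+2 from by omega]
      omega

/-! ### `intChoose` basics and `Icc → range` conversion -/

lemma intChoose_natCast (a b : ℕ) : intChoose (a : ℤ) (b : ℤ) = (a.choose b : ℤ) := by
  unfold intChoose
  split_ifs with h
  · rcases h with h | h
    · have : a < b := by exact_mod_cast h
      rw [Nat.choose_eq_zero_of_lt this]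
      simp
    · omega
  · simp

lemma intChoose_eq_zero_of_lt {a b : ℤ} (h : a < b) : intChoose a b = 0 := by
  unfold intChoose
  rw [if_pos (Or.inl h)]

lemma sum_Icc_int {M : Type*} [AddCommMonoid M] (a b : ℤ) (f : ℤ → M) :
    (∑ i ∈ Finset.Icc a b, f i) = ∑ k ∈ Finset.range (b + 1 - a).toNat, f (a + k) := by
  rcases le_or_gt a (b+1) with h | h
  · apply Finset.sum_nbij' (fun i => (i - a).toNat) (fun k => a + k)
    · intro i hi
      simp only [Finset.mem_Icc] at hi
      simp only [Finset.mem_range]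
      omega
    · intro k hk
      simp only [Finset.mem_range] at hk
      simp only [Finset.mem_Icc]
      omega
    · intro i hi
      simp only [Finset.mem_Icc] at hi
      omega
    · intro k hk
      simp only [Finset.mem_range] at hk
      omega
    · intro i hi
      simp only [Finset.mem_Icc] at hi
      congr 1
      omega
  · rw [Finset.Icc_eq_empty (by omega), show (b+1-a).toNat = 0 by omega]
    simp

/-! ### Inner sums -/

lemma natAB (Q d : ℕ) :
    ∑ l ∈ range (Q+1), (2*Q-l).choose Q * (d+l).choose d = (2*Q+1+d).choose Q := by
  have h : ∀ l ∈ range (Q+1), (2*Q-l).choose Q * (d+l).choose d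
      = (d+l).choose l * (Q+(Q-l)).choose (Q-l) := by
    intro l hl
    simp only [mem_range] at hl
    rw [show (d+l).choose d = (d+l).choose l from choose_symm' (by omega),
        show (2*Q-l).choose Q = (Q+(Q-l)).choose (Q-l) by
          rw [show 2*Q-l = Q+(Q-l) by omega]; exact choose_symm' (by omega)]
    ring
  rw [Finset.sum_congr rfl h, vand d Q Q, show d+Q+Q+1 = 2*Q+1+d by omega]

lemma natC (Q k e : ℕ) :
    ∑ i ∈ range (e+1), (Q+e-i).choose Q * (k+i).choose k = (k+Q+e+1).choose (Q+k+1) := by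
  have h : ∀ i ∈ range (e+1), (Q+e-i).choose Q * (k+i).choose k
      = (k+i).choose i * (Q+(e-i)).choose (e-i) := by
    intro i hi
    simp only [mem_range] at hi
    rw [show (k+i).choose k = (k+i).choose i from choose_symm' (by omega),
        show (Q+e-i).choose Q = (Q+(e-i)).choose (e-i) by
          rw [show Q+e-i = Q+(e-i) by omega]; exact choose_symm' (by omega)]
    ring
  rw [Finset.sum_congr rfl h, vand k Q e]
  exact choose_symm' (by omega)

lemma innerAB (Q k J : ℕ) :
    ∑ t ∈ Finset.Icc (1:ℤ) ((Q:ℤ)+1),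
        ((if 1 + (k:ℤ) + t = (J:ℤ)+1 then F ((Q:ℤ)+1) t else 0)
          + F ((Q:ℤ)+1) t * P (1+(k:ℤ) - ((J:ℤ)+1) + 1) t)
      = intChoose (2*(Q:ℤ)+1+(k:ℤ)-(J:ℤ)) (Q:ℤ) := by
  rcases le_or_gt (J:ℕ) k with hkJ | hkJ
  · rw [sum_Icc_int, show ((Q:ℤ)+1+1-1).toNat = Q+1 by omega]
    have h : ∀ l ∈ range (Q+1),
        ((if 1 + (k:ℤ) + (1+(l:ℤ)) = (J:ℤ)+1 then F ((Q:ℤ)+1) (1+(l:ℤ)) else 0)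
          + F ((Q:ℤ)+1) (1+(l:ℤ)) * P (1+(k:ℤ) - ((J:ℤ)+1) + 1) (1+(l:ℤ)))
        = (((2*Q-l).choose Q : ℕ) : ℤ) * (((k-J+l).choose (k-J) : ℕ) : ℤ) := by
      intro l hl
      simp only [mem_range] at hl
      rw [if_neg (by omega), zero_add]
      unfold F P
      rw [if_pos (by constructor <;> omega)]
      rw [show 2*((Q:ℤ)+1) - (1+(l:ℤ)) - 1 = ((2*Q-l : ℕ) : ℤ) by omega,
          show (Q:ℤ)+1-1 = ((Q:ℕ):ℤ) by omega,
          show 1+(k:ℤ)-((J:ℤ)+1)+1 + (1+(l:ℤ)) - 2 = ((k-J+l : ℕ) : ℤ) by omega,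
          show 1+(k:ℤ)-((J:ℤ)+1)+1 - 1 = ((k-J : ℕ) : ℤ) by omega,
          intChoose_natCast, intChoose_natCast]
    rw [Finset.sum_congr rfl h, show (2*(Q:ℤ)+1+(k:ℤ)-(J:ℤ)) = ((2*Q+1+(k-J) : ℕ) : ℤ) by omega,
        intChoose_natCast, ← natAB Q (k-J)]
    push_cast
    rfl
  · have hP : ∀ t ∈ Finset.Icc (1:ℤ) ((Q:ℤ)+1),
        ((if 1 + (k:ℤ) + t = (J:ℤ)+1 then F ((Q:ℤ)+1) t else 0)
          + F ((Q:ℤ)+1) t * P (1+(k:ℤ) - ((J:ℤ)+1) + 1) t)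
        = (if t = (J:ℤ)-(k:ℤ) then F ((Q:ℤ)+1) t else 0) := by
      intro t ht
      have h1 : P (1+(k:ℤ) - ((J:ℤ)+1) + 1) t = 0 := by
        unfold P
        rw [if_neg]
        intro hc
        omega
      rw [h1, mul_zero, add_zero,
          if_congr (show (1 + (k:ℤ) + t = (J:ℤ)+1) ↔ (t = (J:ℤ)-(k:ℤ)) by omega) rfl rfl]
    rw [Finset.sum_congr rfl hP, Finset.sum_ite_eq' (Finset.Icc (1:ℤ) ((Q:ℤ)+1)) ((J:ℤ)-(k:ℤ))]
    by_cases hm : (J:ℤ)-(k:ℤ) ∈ Finset.Icc (1:ℤ) ((Q:ℤ)+1)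
    · rw [if_pos hm]
      simp only [Finset.mem_Icc] at hm
      unfold F
      congr 1 <;> omega
    · rw [if_neg hm]
      simp only [Finset.mem_Icc] at hm
      have : ¬ (J:ℤ)-(k:ℤ) ≤ (Q:ℤ)+1 := by omega
      rw [intChoose_eq_zero_of_lt (by omega)]

lemma innerC (Q k J : ℕ) :
    ∑ t ∈ Finset.Icc ((J:ℤ)+1) ((Q:ℤ)+1), F ((Q:ℤ)+1) t * P (1+(k:ℤ)) (t - ((J:ℤ)+1) + 1)
      = intChoose (2*(Q:ℤ)+1+(k:ℤ)-(J:ℤ)) ((Q:ℤ)+(k:ℤ)+1) := by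
  rcases le_or_gt J Q with hJQ | hJQ
  · rw [sum_Icc_int, show ((Q:ℤ)+1+1-((J:ℤ)+1)).toNat = (Q-J)+1 by omega]
    have h : ∀ i ∈ range ((Q-J)+1),
        F ((Q:ℤ)+1) ((J:ℤ)+1+(i:ℤ)) * P (1+(k:ℤ)) ((J:ℤ)+1+(i:ℤ) - ((J:ℤ)+1) + 1)
        = (((Q+(Q-J)-i).choose Q : ℕ) : ℤ) * (((k+i).choose k : ℕ) : ℤ) := by
      intro i hi
      simp only [mem_range] at hi
      unfold F P
      rw [if_pos (by constructor <;> omega)]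
      rw [show 2*((Q:ℤ)+1) - ((J:ℤ)+1+(i:ℤ)) - 1 = ((Q+(Q-J)-i : ℕ) : ℤ) by omega,
          show (Q:ℤ)+1-1 = ((Q:ℕ):ℤ) by omega,
          show 1+(k:ℤ) + ((J:ℤ)+1+(i:ℤ) - ((J:ℤ)+1) + 1) - 2 = ((k+i : ℕ) : ℤ) by omega,
          show 1+(k:ℤ)-1 = ((k : ℕ) : ℤ) by omega,
          intChoose_natCast, intChoose_natCast]
    rw [Finset.sum_congr rfl h,
        show (2*(Q:ℤ)+1+(k:ℤ)-(J:ℤ)) = ((k+Q+(Q-J)+1 : ℕ) : ℤ) by omega,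
        show ((Q:ℤ)+(k:ℤ)+1) = ((Q+k+1 : ℕ) : ℤ) by omega,
        intChoose_natCast, ← natC Q k (Q-J)]
    push_cast
    rfl
  · rw [Finset.Icc_eq_empty (by omega : ¬ ((J:ℤ)+1 ≤ (Q:ℤ)+1)), Finset.sum_empty,
        intChoose_eq_zero_of_lt (by omega)]

/-! ### The outer sum -/

lemma NI1 (P Q J : ℕ) (hJ : J ≤ Q) :
    ∑ k ∈ range (P+1), (2*P-k).choose P * ((2*Q+1+k-J).choose Q + (2*Q+1+k-J).choose (Q+k+1))
      = (2*P+2*Q+2-J).choose (P+Q+1) := by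
  set e := Q - J with he
  set n := P + e + 1 with hn
  rw [← Finset.sum_range_reflect
    (fun k => (2*P-k).choose P * ((2*Q+1+k-J).choose Q + (2*Q+1+k-J).choose (Q+k+1))) (P+1)]
  have h1 : ∀ k ∈ range (P+1),
      (2*P-(P+1-1-k)).choose P * ((2*Q+1+(P+1-1-k)-J).choose Q + (2*Q+1+(P+1-1-k)-J).choose (Q+(P+1-1-k)+1))
      = (P+k).choose P * (Q+(n-k)).choose Q + (P+k).choose P * ((e+P+Q+1-k).choose e) := by
    intro k hk
    simp only [mem_range] at hk
    rw [show 2*P-(P+1-1-k) = P+k by omega,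
        show 2*Q+1+(P+1-1-k)-J = Q+(n-k) by omega]
    rw [show (Q+(n-k)).choose (Q+(P+1-1-k)+1) = (Q+(n-k)).choose e from choose_symm' (by omega)]
    rw [show (Q+(n-k)).choose e = (e+P+Q+1-k).choose e by rw [show Q+(n-k) = e+P+Q+1-k by omega]]
    ring
  rw [Finset.sum_congr rfl h1, Finset.sum_add_distrib, Mlem P Q e]
  have hv := vand P Q n
  rw [show n+1 = (P+1)+(e+1) by omega, Finset.sum_range_add] at hv
  have h2 : ∀ i ∈ range (e+1),
      (P+(P+1+i)).choose (P+1+i) * (Q+(n-(P+1+i))).choose (n-(P+1+i))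
      = (2*P+1+i).choose P * (Q+e-i).choose Q := by
    intro i hi
    simp only [mem_range] at hi
    rw [show P+(P+1+i) = 2*P+1+i by omega,
        show (2*P+1+i).choose (P+1+i) = (2*P+1+i).choose P from choose_symm' (by omega),
        show n-(P+1+i) = e-i by omega,
        show (Q+(e-i)).choose (e-i) = (Q+(e-i)).choose Q from choose_symm' (by omega),
        show Q+(e-i) = Q+e-i by omega]
  have h3 : ∀ k ∈ range (P+1),
      (P+k).choose k * (Q+(n-k)).choose (n-k)
      = (P+k).choose P * (Q+(n-k)).choose Q := by
    intro k hk
    simp only [mem_range] at hk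
    rw [show (P+k).choose k = (P+k).choose P from choose_symm' (by omega),
        show (Q+(n-k)).choose (n-k) = (Q+(n-k)).choose Q from choose_symm' (by omega)]
  rw [Finset.sum_congr rfl h2, Finset.sum_congr rfl h3] at hv
  rw [show (P+Q+n+1) = 2*P+2*Q+2-J by omega] at hv
  rw [show (2*P+2*Q+2-J).choose n = (2*P+2*Q+2-J).choose (P+Q+1) from choose_symm' (by omega)] at hv
  omega

lemma NI2 (P Q J n : ℕ) (hn : n + J = P+Q+1) :
    ∑ k ∈ range (n+1), (P+k).choose P * (Q+(n-k)).choose Q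
      = (2*P+2*Q+2-J).choose (P+Q+1) := by
  have h3 : ∀ k ∈ range (n+1),
      (P+k).choose P * (Q+(n-k)).choose Q
      = (P+k).choose k * (Q+(n-k)).choose (n-k) := by
    intro k hk
    simp only [mem_range] at hk
    rw [show (P+k).choose P = (P+k).choose k from choose_symm' (by omega),
        show (Q+(n-k)).choose Q = (Q+(n-k)).choose (n-k) from choose_symm' (by omega)]
  rw [Finset.sum_congr rfl h3, vand P Q n,
      show (P+Q+n+1) = 2*P+2*Q+2-J by omega]
  exact choose_symm' (by omega)

lemma finlem (P Q J : ℕ) (hJ : J ≤ P+Q+1) :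
    ∑ k ∈ range (P+1), F ((P:ℤ)+1) (1+(k:ℤ)) *
      (intChoose (2*(Q:ℤ)+1+(k:ℤ)-(J:ℤ)) (Q:ℤ)
        + intChoose (2*(Q:ℤ)+1+(k:ℤ)-(J:ℤ)) ((Q:ℤ)+(k:ℤ)+1))
    = intChoose (2*((P:ℤ)+(Q:ℤ)+2) - ((J:ℤ)+1) - 1) ((P:ℤ)+(Q:ℤ)+1) := by
  rw [show 2*((P:ℤ)+(Q:ℤ)+2) - ((J:ℤ)+1) - 1 = ((2*P+2*Q+2-J : ℕ) : ℤ) by omega,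
      show (P:ℤ)+(Q:ℤ)+1 = ((P+Q+1 : ℕ):ℤ) by omega, intChoose_natCast]
  rcases le_or_gt J Q with hJQ | hJQ
  · have h : ∀ k ∈ range (P+1), F ((P:ℤ)+1) (1+(k:ℤ)) *
        (intChoose (2*(Q:ℤ)+1+(k:ℤ)-(J:ℤ)) (Q:ℤ)
          + intChoose (2*(Q:ℤ)+1+(k:ℤ)-(J:ℤ)) ((Q:ℤ)+(k:ℤ)+1))
        = (((2*P-k).choose P * ((2*Q+1+k-J).choose Q + (2*Q+1+k-J).choose (Q+k+1)) : ℕ) : ℤ) := by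
      intro k hk
      simp only [mem_range] at hk
      unfold F
      rw [show 2*((P:ℤ)+1) - (1+(k:ℤ)) - 1 = ((2*P-k : ℕ) : ℤ) by omega,
          show (P:ℤ)+1-1 = ((P:ℕ):ℤ) by omega,
          show 2*(Q:ℤ)+1+(k:ℤ)-(J:ℤ) = ((2*Q+1+k-J : ℕ) : ℤ) by omega,
          show (Q:ℤ)+(k:ℤ)+1 = ((Q+k+1 : ℕ) : ℤ) by omega,
          intChoose_natCast, intChoose_natCast, intChoose_natCast]
      push_cast
      ring
    rw [Finset.sum_congr rfl h, ← Nat.cast_sum, NI1 P Q J hJQ]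
  · set n := P+Q+1-J with hn
    have h : ∀ k ∈ range (P+1), F ((P:ℤ)+1) (1+(k:ℤ)) *
        (intChoose (2*(Q:ℤ)+1+(k:ℤ)-(J:ℤ)) (Q:ℤ)
          + intChoose (2*(Q:ℤ)+1+(k:ℤ)-(J:ℤ)) ((Q:ℤ)+(k:ℤ)+1))
        = F ((P:ℤ)+1) (1+(k:ℤ)) * intChoose (2*(Q:ℤ)+1+(k:ℤ)-(J:ℤ)) (Q:ℤ) := by
      intro k hk
      rw [intChoose_eq_zero_of_lt (show 2*(Q:ℤ)+1+(k:ℤ)-(J:ℤ) < (Q:ℤ)+(k:ℤ)+1 by omega), add_zero]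
    rw [Finset.sum_congr rfl h,
        ← Finset.sum_range_reflect
          (fun k => F ((P:ℤ)+1) (1+(k:ℤ)) * intChoose (2*(Q:ℤ)+1+(k:ℤ)-(J:ℤ)) (Q:ℤ)) (P+1)]
    rw [show P+1 = (n+1)+(P-n) by omega, Finset.sum_range_add]
    have h2 : ∀ i ∈ range (P-n),
        F ((P:ℤ)+1) (1+((n+1+(P-n)-1-(n+1+i) : ℕ):ℤ))
          * intChoose (2*(Q:ℤ)+1+((n+1+(P-n)-1-(n+1+i) : ℕ):ℤ)-(J:ℤ)) (Q:ℤ) = 0 := by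
      intro i hi
      simp only [mem_range] at hi
      rw [intChoose_eq_zero_of_lt
        (show 2*(Q:ℤ)+1+((n+1+(P-n)-1-(n+1+i) : ℕ):ℤ)-(J:ℤ) < (Q:ℤ) by omega), mul_zero]
    rw [Finset.sum_congr rfl h2, Finset.sum_const_zero, add_zero]
    have h1 : ∀ k ∈ range (n+1),
        F ((P:ℤ)+1) (1+((n+1+(P-n)-1-k : ℕ):ℤ))
          * intChoose (2*(Q:ℤ)+1+((n+1+(P-n)-1-k : ℕ):ℤ)-(J:ℤ)) (Q:ℤ)
        = (((P+k).choose P * (Q+(n-k)).choose Q : ℕ) : ℤ) := by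
      intro k hk
      simp only [mem_range] at hk
      unfold F
      rw [show 2*((P:ℤ)+1) - (1+((n+1+(P-n)-1-k : ℕ):ℤ)) - 1 = ((P+k : ℕ) : ℤ) by omega,
          show (P:ℤ)+1-1 = ((P:ℕ):ℤ) by omega,
          show 2*(Q:ℤ)+1+((n+1+(P-n)-1-k : ℕ):ℤ)-(J:ℤ) = ((Q+(n-k) : ℕ) : ℤ) by omega,
          intChoose_natCast, intChoose_natCast]
      push_cast
      ring
    rw [Finset.sum_congr rfl h1, ← Nat.cast_sum, NI2 P Q J n (by omega)]

/-! ### Main theorem -/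

/-- for `p ≥ 1`, `q ≥ 2`, `m = p + q − 1` and `1 ≤ j ≤ m`,
    `C(2m−j−1, m−1) = A_{p,q−1}(j) + B_{p,q−1}(j) + C_{p,q−1}(j)`. -/
theorem key_binomial_identity (p q : ℤ) (hp : 1 ≤ p) (hq : 2 ≤ q)
    (j : ℤ) (hj1 : 1 ≤ j) (hjm : j ≤ p + q - 1) :
    intChoose (2 * (p + q - 1) - j - 1) ((p + q - 1) - 1)
      = A p (q - 1) j + B p (q - 1) j + Cc p (q - 1) j := by
  obtain ⟨Pn, hP⟩ : ∃ Pn : ℕ, p = (Pn:ℤ)+1 := ⟨(p-1).toNat, by omega⟩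
  obtain ⟨Qn, hQ⟩ : ∃ Qn : ℕ, q = (Qn:ℤ)+2 := ⟨(q-2).toNat, by omega⟩
  obtain ⟨Jn, hJ'⟩ : ∃ Jn : ℕ, j = (Jn:ℤ)+1 := ⟨(j-1).toNat, by omega⟩
  subst hP hQ hJ'
  have hJ : Jn ≤ Pn + Qn + 1 := by omega
  unfold A B Cc
  rw [show ((Qn:ℤ)+2-1) = (Qn:ℤ)+1 by ring,
      show 2 * ((Pn:ℤ)+1+((Qn:ℤ)+2)-1) - ((Jn:ℤ)+1) - 1 = 2*((Pn:ℤ)+(Qn:ℤ)+2) - ((Jn:ℤ)+1) - 1 by ring,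
      show ((Pn:ℤ)+1+((Qn:ℤ)+2)-1)-1 = (Pn:ℤ)+(Qn:ℤ)+1 by ring]
  rw [← Finset.sum_add_distrib, ← Finset.sum_add_distrib]
  rw [sum_Icc_int 1 ((Pn:ℤ)+1), show ((Pn:ℤ)+1+1-1).toNat = Pn+1 by omega]
  have hmain : ∀ k ∈ range (Pn+1),
      ((∑ t ∈ Finset.Icc (1:ℤ) ((Qn:ℤ)+1),
          if 1 + (k:ℤ) + t = (Jn:ℤ)+1 then F ((Pn:ℤ)+1) (1+(k:ℤ)) * F ((Qn:ℤ)+1) t else 0)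
        + (∑ t ∈ Finset.Icc (1:ℤ) ((Qn:ℤ)+1),
            F ((Pn:ℤ)+1) (1+(k:ℤ)) * F ((Qn:ℤ)+1) t * P (1+(k:ℤ) - ((Jn:ℤ)+1) + 1) t)
        + (∑ t ∈ Finset.Icc ((Jn:ℤ)+1) ((Qn:ℤ)+1),
            F ((Pn:ℤ)+1) (1+(k:ℤ)) * F ((Qn:ℤ)+1) t * P (1+(k:ℤ)) (t - ((Jn:ℤ)+1) + 1)))
      = F ((Pn:ℤ)+1) (1+(k:ℤ)) *
          (intChoose (2*(Qn:ℤ)+1+(k:ℤ)-(Jn:ℤ)) (Qn:ℤ)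
            + intChoose (2*(Qn:ℤ)+1+(k:ℤ)-(Jn:ℤ)) ((Qn:ℤ)+(k:ℤ)+1)) := by
    intro k hk
    have e1 : (∑ t ∈ Finset.Icc (1:ℤ) ((Qn:ℤ)+1),
          if 1 + (k:ℤ) + t = (Jn:ℤ)+1 then F ((Pn:ℤ)+1) (1+(k:ℤ)) * F ((Qn:ℤ)+1) t else 0)
        + (∑ t ∈ Finset.Icc (1:ℤ) ((Qn:ℤ)+1),
            F ((Pn:ℤ)+1) (1+(k:ℤ)) * F ((Qn:ℤ)+1) t * P (1+(k:ℤ) - ((Jn:ℤ)+1) + 1) t)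
        = F ((Pn:ℤ)+1) (1+(k:ℤ)) * intChoose (2*(Qn:ℤ)+1+(k:ℤ)-(Jn:ℤ)) (Qn:ℤ) := by
      rw [← Finset.sum_add_distrib]
      rw [Finset.sum_congr rfl (fun t ht => by
        show (if 1 + (k:ℤ) + t = (Jn:ℤ)+1 then F ((Pn:ℤ)+1) (1+(k:ℤ)) * F ((Qn:ℤ)+1) t else 0)
            + F ((Pn:ℤ)+1) (1+(k:ℤ)) * F ((Qn:ℤ)+1) t * P (1+(k:ℤ) - ((Jn:ℤ)+1) + 1) t
          = F ((Pn:ℤ)+1) (1+(k:ℤ)) *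
              ((if 1 + (k:ℤ) + t = (Jn:ℤ)+1 then F ((Qn:ℤ)+1) t else 0)
                + F ((Qn:ℤ)+1) t * P (1+(k:ℤ) - ((Jn:ℤ)+1) + 1) t)
        split_ifs <;> ring)]
      rw [← Finset.mul_sum, innerAB Qn k Jn]
    have e2 : (∑ t ∈ Finset.Icc ((Jn:ℤ)+1) ((Qn:ℤ)+1),
          F ((Pn:ℤ)+1) (1+(k:ℤ)) * F ((Qn:ℤ)+1) t * P (1+(k:ℤ)) (t - ((Jn:ℤ)+1) + 1))
        = F ((Pn:ℤ)+1) (1+(k:ℤ)) * intChoose (2*(Qn:ℤ)+1+(k:ℤ)-(Jn:ℤ)) ((Qn:ℤ)+(k:ℤ)+1) := by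
      rw [Finset.sum_congr rfl (fun t ht => by
        show F ((Pn:ℤ)+1) (1+(k:ℤ)) * F ((Qn:ℤ)+1) t * P (1+(k:ℤ)) (t - ((Jn:ℤ)+1) + 1)
          = F ((Pn:ℤ)+1) (1+(k:ℤ)) * (F ((Qn:ℤ)+1) t * P (1+(k:ℤ)) (t - ((Jn:ℤ)+1) + 1))
        ring)]
      rw [← Finset.mul_sum, innerC Qn k Jn]
    rw [e1, e2, ← mul_add]
  rw [Finset.sum_congr rfl hmain]
  exact (finlem Pn Qn Jn hJ).symm
end

section
/- Let p ≥ 1 and q ≥ 2 be integers and let j be an integer with 2 ≤ j ≤ p + q. Then ∑_{i=j−1}^{p+q−1} C_{p,q−1}(i) = C_{p,q}(j). -/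
lemma intChoose_nonneg (a b : ℤ) (ha : 0 ≤ a) (hb : 0 ≤ b) :
    intChoose a b = (a.toNat.choose b.toNat : ℤ) := by
  unfold intChoose
  split
  · rename_i h
    rcases h with h | h
    · rw [Nat.choose_eq_zero_of_lt (by omega)]; simp
    · omega
  · rfl

lemma intChoose_pascal (a b : ℤ) (ha : 1 ≤ a) (hb : 1 ≤ b) :
    intChoose a b = intChoose (a - 1) b + intChoose (a - 1) (b - 1) := by
  rw [intChoose_nonneg a b (by omega) (by omega),
      intChoose_nonneg (a-1) b (by omega) (by omega),
      intChoose_nonneg (a-1) (b-1) (by omega) (by omega)]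
  have h1 : a.toNat = (a-1).toNat + 1 := by omega
  have h2 : b.toNat = (b-1).toNat + 1 := by omega
  rw [h1, h2, Nat.choose_succ_succ']
  push_cast
  ring

lemma F_pascal (q t : ℤ) (hq : 2 ≤ q) (ht : 2 ≤ t) :
    F q t = F q (t + 1) + F (q - 1) (t - 1) := by
  unfold F
  have h1 : 2 * q - (t+1) - 1 = (2*q - t - 1) - 1 := by ring
  have h2 : 2 * (q-1) - (t-1) - 1 = (2*q - t - 1) - 1 := by ring
  have h3 : (q - 1 : ℤ) - 1 = q - 2 := by ring
  rw [h1, h2, h3]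
  -- need 2*q - t - 1 ≥ 1? Not necessarily: if t = 2q-2 then =1, ok; t ≤ ?
  by_cases h : 1 ≤ 2*q - t - 1
  · rw [intChoose_pascal (2*q - t - 1) (q-1) h (by omega)]
    have : (q:ℤ) - 1 - 1 = q - 2 := by ring
    rw [this]
  · -- 2*q - t - 1 ≤ 0, i.e. t ≥ 2q - 1; all terms vanish or degenerate
    have hq1 : 1 ≤ (q:ℤ) - 1 := by omega
    unfold intChoose
    rcases lt_or_eq_of_le (by omega : 2*q - t - 1 ≤ 0) with h0 | h0
    · rw [if_pos (Or.inl (by omega)), if_pos (by omega), if_pos (by omega)]; ring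
    · -- 2*q - t - 1 = 0
      rw [if_pos (Or.inl (by omega))]
      rw [if_pos (by omega), if_pos (by omega)]
      ring

lemma F_top (q : ℤ) (hq : 1 ≤ q) : F q (q + 1) = 0 := by
  unfold F intChoose
  rw [if_pos (Or.inl (by omega))]

lemma sum_Icc_bot (a b : ℤ) (h : a ≤ b) (f : ℤ → ℤ) :
    ∑ i ∈ Finset.Icc a b, f i = f a + ∑ i ∈ Finset.Icc (a+1) b, f i := by
  have hins : Finset.Icc a b = insert a (Finset.Icc (a+1) b) := by
    ext x
    simp only [Finset.mem_Icc, Finset.mem_insert]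
    omega
  rw [hins, Finset.sum_insert (by simp only [Finset.mem_Icc]; omega)]

lemma sum_Icc_top' (a b : ℤ) (h : a ≤ b) (f : ℤ → ℤ) :
    ∑ i ∈ Finset.Icc a b, f i = ∑ i ∈ Finset.Icc a (b-1), f i + f b := by
  have hins : Finset.Icc a b = insert b (Finset.Icc a (b-1)) := by
    ext x
    simp only [Finset.mem_Icc, Finset.mem_insert]
    omega
  rw [hins, Finset.sum_insert (by simp only [Finset.mem_Icc]; omega), add_comm]

lemma sum_Icc_shift (a b c : ℤ) (f : ℤ → ℤ) :
    ∑ i ∈ Finset.Icc (a+c) (b+c), f i = ∑ i ∈ Finset.Icc a b, f (i + c) := by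
  rw [← Finset.map_add_right_Icc, Finset.sum_map]
  rfl

/-- Key recurrence. -/
lemma Cc_rec (p q j : ℤ) (hp : 1 ≤ p) (hq : 2 ≤ q) (hj : 2 ≤ j) :
    Cc p q j = Cc p q (j + 1) + Cc p (q - 1) (j - 1) := by
  unfold Cc
  rw [← Finset.sum_add_distrib]
  apply Finset.sum_congr rfl
  intro s _
  -- rewrite F q t via pascal
  have step1 : ∑ t ∈ Finset.Icc j q, F p s * F q t * P s (t - j + 1)
      = (∑ t ∈ Finset.Icc j q, F p s * F q (t+1) * P s (t - j + 1))
      + ∑ t ∈ Finset.Icc j q, F p s * F (q-1) (t-1) * P s (t - j + 1) := by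
    rw [← Finset.sum_add_distrib]
    apply Finset.sum_congr rfl
    intro t ht
    simp only [Finset.mem_Icc] at ht
    rw [F_pascal q t hq (by omega)]
    ring
  rw [step1]
  congr 1
  · -- first sum = Cc p q (j+1) inner
    have h1 : ∑ t ∈ Finset.Icc (j+1) q, F p s * F q t * P s (t - (j+1) + 1)
        = ∑ t ∈ Finset.Icc (j+1) (q+1), F p s * F q t * P s (t - j) := by
      by_cases hle : j + 1 ≤ q + 1
      · rw [sum_Icc_top' (j+1) (q+1) hle, F_top q (by omega)]
        have hz : F p s * 0 * P s (q + 1 - j) = 0 := by ring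
        rw [hz, add_zero]
        apply Finset.sum_congr (by congr 1; ring)
        intro t _
        rw [show t - (j+1) + 1 = t - j by ring]
      · rw [Finset.Icc_eq_empty (by omega), Finset.Icc_eq_empty (by omega)]
        simp
    rw [h1]
    have := sum_Icc_shift j q 1 (fun t => F p s * F q t * P s (t - j))
    rw [this]
    apply Finset.sum_congr rfl
    intro t _
    rw [show t + 1 - j = t - j + 1 by ring]
  · -- second sum = Cc p (q-1) (j-1) inner
    have := sum_Icc_shift (j-1) (q-1) 1 (fun t => F p s * F (q-1) (t-1) * P s (t - j + 1))
    have heq : Finset.Icc (j-1+1) (q-1+1) = Finset.Icc j q := by congr 1 <;> ring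
    rw [heq] at this
    rw [this]
    apply Finset.sum_congr rfl
    intro t _
    have e1 : t + 1 - 1 = t := by ring
    have e2 : t + 1 - j + 1 = t - (j-1) + 1 := by ring
    rw [e1, e2]

lemma Cc_zero_of_gt (p q j : ℤ) (h : q < j) : Cc p q j = 0 := by
  unfold Cc
  apply Finset.sum_eq_zero
  intro s _
  rw [Finset.Icc_eq_empty (by omega)]
  simp

/-- for `p ≥ 1`, `q ≥ 2`, `2 ≤ j ≤ p + q`,
  `∑_{i=j−1}^{p+q−1} C_{p,q−1}(i) = C_{p,q}(j)`. -/
theorem sum_C_step (p q : ℤ) (hp : 1 ≤ p) (hq : 2 ≤ q)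
    (j : ℤ) (hj2 : 2 ≤ j) (hjpq : j ≤ p + q) :
    (∑ i ∈ Finset.Icc (j - 1) (p + q - 1), Cc p (q - 1) i) = Cc p q j := by
  -- downward induction: let n = p + q - j
  obtain ⟨n, hn⟩ : ∃ n : ℕ, p + q - j = n := ⟨(p + q - j).toNat, by omega⟩
  have hj' : j = p + q - n := by omega
  subst hj'
  clear hjpq
  induction n with
  | zero =>
    simp only [Nat.cast_zero, sub_zero]
    rw [Cc_zero_of_gt p q (p+q) (by omega)]
    rw [show Finset.Icc (p+q-1) (p+q-1) = {p+q-1} from Finset.Icc_self _]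
    rw [Finset.sum_singleton]
    exact Cc_zero_of_gt p (q-1) (p+q-1) (by omega)
  | succ m ih =>
    have hm : (2:ℤ) ≤ p + q - m := by push_cast at hj2 ⊢; omega
    have hstep := Cc_rec p q (p + q - (m+1:ℕ)) hp hq hj2
    have harr : (p + q - (m+1:ℕ)) + 1 = p + q - (m:ℕ) := by push_cast; ring
    rw [harr] at hstep
    rw [hstep]
    rw [sum_Icc_bot (p + q - (m+1:ℕ) - 1) (p + q - 1) (by push_cast; omega)]
    rw [add_comm]
    congr 1
    · have : p + q - (m+1:ℕ) - 1 + 1 = p + q - (m:ℕ) - 1 := by push_cast; ring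
      rw [this]
      exact ih hm (by omega)
end

section
/- Let s ≥ 1, t ≥ 1 and l be integers with 1 ≤ l ≤ s. The number of maximal chains of Fin s × Fin (t+1) (componentwise order) having exactly l elements with second coordinate 0 equals the number of maximal chains of Fin (s−l+1) × Fin t (componentwise order). -/
set_option linter.unnecessarySeqFocus false
set_option linter.unusedVariables false


open Set

section General
variable {α : Type*} [PartialOrder α]

lemma myChain_exists_greatest {s : Set α} (hfin : s.Finite) (hC : IsChain (· ≤ ·) s)
    (hne : s.Nonempty) : ∃ m ∈ s, ∀ x ∈ s, x ≤ m := by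
  obtain ⟨m, hm, hmax⟩ := hfin.exists_maximal hne
  refine ⟨m, hm, fun x hx => ?_⟩
  rcases eq_or_ne x m with rfl | h
  · exact le_rfl
  · rcases hC hx hm h with h' | h'
    · exact h'
    · exact hmax hx h'

lemma myChain_exists_least {s : Set α} (hfin : s.Finite) (hC : IsChain (· ≤ ·) s)
    (hne : s.Nonempty) : ∃ m ∈ s, ∀ x ∈ s, m ≤ x := by
  obtain ⟨m, hm, hmin⟩ := hfin.exists_minimal hne
  refine ⟨m, hm, fun x hx => ?_⟩
  rcases eq_or_ne x m with rfl | h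
  · exact le_rfl
  · rcases hC hx hm h with h' | h'
    · exact hmin hx h'
    · exact h'

lemma myMaxChain_bot_mem [OrderBot α] {C : Set α} (h : IsMaxChain (· ≤ ·) C) : ⊥ ∈ C := by
  have hins : IsChain (· ≤ ·) (insert ⊥ C) := h.1.insert fun b _ _ => Or.inl bot_le
  have := h.2 hins (subset_insert _ _)
  rw [this]; exact mem_insert _ _

lemma myMaxChain_top_mem [OrderTop α] {C : Set α} (h : IsMaxChain (· ≤ ·) C) : ⊤ ∈ C := by
  have hins : IsChain (· ≤ ·) (insert ⊤ C) := h.1.insert fun b _ _ => Or.inr le_top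
  have := h.2 hins (subset_insert _ _)
  rw [this]; exact mem_insert _ _

lemma myMaxChain_covBy {C : Set α} (h : IsMaxChain (· ≤ ·) C) {x y : α}
    (hx : x ∈ C) (hy : y ∈ C)
    (hxy : x < y) (hcons : ∀ z ∈ C, ¬(x < z ∧ z < y)) : x ⋖ y := by
  by_contra hnc
  obtain ⟨z, hz1, hz2⟩ := exists_lt_lt_of_not_covBy hxy hnc
  have hzC : z ∉ C := fun hzc => hcons z hzc ⟨hz1, hz2⟩
  have hins : IsChain (· ≤ ·) (insert z C) := by
    refine h.1.insert fun b hb hne => ?_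
    rcases eq_or_ne b x with rfl | hbx
    · exact Or.inr hz1.le
    rcases eq_or_ne b y with rfl | hby
    · exact Or.inl hz2.le
    rcases h.1.total hb hx with hbx' | hbx'
    · exact Or.inr (hbx'.trans hz1.le)
    · rcases h.1.total hb hy with hby' | hby'
      · exact absurd ⟨lt_of_le_of_ne hbx' (Ne.symm hbx), lt_of_le_of_ne hby' hby⟩ (hcons b hb)
      · exact Or.inl (hz2.le.trans hby')
  have := h.2 hins (subset_insert _ _)
  exact hzC (this ▸ mem_insert _ _)

end General

section General2
open Set
variable {α : Type*} [PartialOrder α]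

lemma myIsMaxChain_of [BoundedOrder α] [Finite α] {C : Set α}
    (hC : IsChain (· ≤ ·) C) (hbot : ⊥ ∈ C) (htop : ⊤ ∈ C)
    (hcov : ∀ x ∈ C, ∀ y ∈ C, x < y → (∀ z ∈ C, ¬(x < z ∧ z < y)) → x ⋖ y) :
    IsMaxChain (· ≤ ·) C := by
  refine ⟨hC, fun D hD hCD => ?_⟩
  by_contra hne
  obtain ⟨z, hzD, hzC⟩ : ∃ z, z ∈ D ∧ z ∉ C := by
    by_contra h
    push_neg at h
    exact hne (hCD.antisymm h)
  have hcomp : ∀ c ∈ C, c ≤ z ∨ z ≤ c := fun c hc =>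
    hD.total (hCD hc) hzD
  obtain ⟨x, hxS, hxmax⟩ := myChain_exists_greatest (s := {c ∈ C | c ≤ z})
    (Set.toFinite _) (hC.mono (sep_subset _ _)) ⟨⊥, hbot, bot_le⟩
  obtain ⟨y, hyS, hymin⟩ := myChain_exists_least (s := {c ∈ C | z ≤ c})
    (Set.toFinite _) (hC.mono (sep_subset _ _)) ⟨⊤, htop, le_top⟩
  have hxz : x < z := lt_of_le_of_ne hxS.2 (fun h => hzC (h ▸ hxS.1))
  have hzy : z < y := lt_of_le_of_ne hyS.2 (fun h => hzC (h.symm ▸ hyS.1))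
  have hcons : ∀ w ∈ C, ¬(x < w ∧ w < y) := by
    rintro w hw ⟨hxw, hwy⟩
    rcases hcomp w hw with h | h
    · exact absurd (hxmax w ⟨hw, h⟩) (not_le_of_gt hxw)
    · exact absurd (hymin w ⟨hw, h⟩) (not_le_of_gt hwy)
  exact (hcov x hxS.1 y hyS.1 (hxz.trans hzy) hcons).2 hxz hzy

lemma myDownset_eq_Iio {T : Set ℕ} (hfin : T.Finite)
    (hdc : ∀ m n, m ≤ n → n ∈ T → m ∈ T) : T = Set.Iio T.ncard := by
  ext n
  simp only [Set.mem_Iio]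
  constructor
  · intro hn
    have h1 : Set.Iic n ⊆ T := fun m hm => hdc m n hm hn
    have h2 : (Set.Iic n).ncard ≤ T.ncard := Set.ncard_le_ncard h1 hfin
    have h3 : (Set.Iic n).ncard = n + 1 := by
      rw [← Finset.coe_Iic, Set.ncard_coe_finset, Nat.card_Iic]
    omega
  · intro hn
    by_contra hnT
    have h2 : T ⊆ Set.Iio n := fun m hm =>
      lt_of_not_ge fun hle => hnT (hdc n m hle hm)
    have h3 : T.ncard ≤ (Set.Iio n).ncard := Set.ncard_le_ncard h2 (Set.finite_Iio n)
    have h4 : (Set.Iio n).ncard = n := by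
      rw [← Finset.coe_Iio, Set.ncard_coe_finset, Nat.card_Iio]
    omega

end General2

section Emb
open Set

variable {c d b : ℕ}

/-- embedding of the small grid into the big grid -/
def myEmb (c d b : ℕ) (q : Fin (d + 1) × Fin (b + 1)) : Fin (c + d + 1) × Fin (b + 2) :=
  (⟨q.1.1 + c, by have := q.1.2; omega⟩, ⟨q.2.1 + 1, by have := q.2.2; omega⟩)

lemma myEmb_le_iff {p q : Fin (d + 1) × Fin (b + 1)} :
    myEmb c d b p ≤ myEmb c d b q ↔ p ≤ q := by
  simp only [myEmb, Prod.le_def, Fin.le_def]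
  omega

lemma myEmb_inj {p q : Fin (d + 1) × Fin (b + 1)}
    (h : myEmb c d b p = myEmb c d b q) : p = q := by
  simp only [myEmb, Prod.ext_iff, Fin.ext_iff] at h ⊢
  omega

lemma myEmb_lt_iff {p q : Fin (d + 1) × Fin (b + 1)} :
    myEmb c d b p < myEmb c d b q ↔ p < q := by
  rw [lt_iff_le_and_ne, lt_iff_le_and_ne, myEmb_le_iff]
  constructor
  · rintro ⟨h1, h2⟩; exact ⟨h1, fun h => h2 (h ▸ rfl)⟩
  · rintro ⟨h1, h2⟩; exact ⟨h1, fun h => h2 (myEmb_inj h)⟩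

lemma myEmb_covBy_iff {p q : Fin (d + 1) × Fin (b + 1)} :
    myEmb c d b p ⋖ myEmb c d b q ↔ p ⋖ q := by
  rw [Prod.covBy_iff, Prod.covBy_iff]
  simp only [myEmb, ← Fin.coe_covBy_iff, Order.covBy_iff_add_one_eq, Fin.ext_iff]
  omega

lemma myEmb_snd_ne_zero (q : Fin (d + 1) × Fin (b + 1)) :
    (myEmb c d b q).2 ≠ 0 := by
  simp only [myEmb, Fin.ext_iff, Ne, Fin.val_zero]
  omega

lemma myEmb_bot : myEmb c d b ⊥ = (⟨c, by omega⟩, ⟨1, by omega⟩) := by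
  simp only [myEmb, Prod.ext_iff, Fin.ext_iff]
  constructor <;> simp [Prod.fst_bot, Prod.snd_bot, Fin.bot_eq_zero]

lemma myEmb_top : myEmb c d b ⊤ = ⊤ := by
  simp only [myEmb, Prod.ext_iff, Fin.ext_iff, Prod.fst_top, Prod.snd_top]
  constructor <;> simp [Fin.top_eq_last, Fin.last] <;> omega

lemma myBot_eq : (⊥ : Fin (c + d + 1) × Fin (b + 2)) = (⟨0, by omega⟩, ⟨0, by omega⟩) := by
  simp only [Prod.ext_iff, Fin.ext_iff, Prod.fst_bot, Prod.snd_bot, Fin.bot_eq_zero]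
  exact ⟨rfl, rfl⟩

lemma myTop_eq : (⊤ : Fin (c + d + 1) × Fin (b + 2)) = (⟨c + d, by omega⟩, ⟨b + 1, by omega⟩) := by
  simp only [Prod.ext_iff, Fin.ext_iff, Prod.fst_top, Prod.snd_top]
  constructor <;> simp [Fin.top_eq_last, Fin.last]

end Emb

section Struct
open Set

variable {c d b : ℕ} {C : Set (Fin (c + d + 1) × Fin (b + 2))}

lemma myPredClosed (hC : IsMaxChain (· ≤ ·) C) {n : ℕ} (h : n + 1 < c + d + 1)
    (hmem : ((⟨n + 1, h⟩ : Fin (c + d + 1)), (0 : Fin (b + 2))) ∈ C) :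
    ((⟨n, by omega⟩ : Fin (c + d + 1)), (0 : Fin (b + 2))) ∈ C := by
  set x : Fin (c + d + 1) × Fin (b + 2) := (⟨n + 1, h⟩, 0) with hx
  have hbot : ⊥ ∈ C := myMaxChain_bot_mem hC
  have hbotlt : (⊥ : Fin (c + d + 1) × Fin (b + 2)) < x := by
    rw [myBot_eq]
    refine lt_of_le_of_ne ?_ ?_
    · simp only [hx, Prod.le_def, Fin.le_def, Fin.val_zero]; omega
    · simp [hx, Prod.ext_iff, Fin.ext_iff]
  obtain ⟨m, hmS, hmax⟩ := myChain_exists_greatest (s := {z ∈ C | z < x}) (Set.toFinite _)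
    (hC.1.mono (Set.sep_subset _ _)) ⟨⊥, hbot, hbotlt⟩
  have hcons : ∀ z ∈ C, ¬(m < z ∧ z < x) := by
    rintro z hz ⟨h1, h2⟩
    exact absurd (hmax z ⟨hz, h2⟩) (not_le_of_gt h1)
  have hcov : m ⋖ x := myMaxChain_covBy hC hmS.1 hmem hmS.2 hcons
  rw [Prod.covBy_iff] at hcov
  rcases hcov with ⟨h1, h2⟩ | ⟨h1, h2⟩
  · rw [← Fin.coe_covBy_iff, Order.covBy_iff_add_one_eq] at h1
    have hm1 : (m.1 : ℕ) = n := by simp only [hx] at h1; omega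
    have hme : m = ((⟨n, by omega⟩ : Fin (c + d + 1)), (0 : Fin (b + 2))) := by
      simp only [Prod.ext_iff, Fin.ext_iff]
      exact ⟨hm1, by simp [h2, hx]⟩
    exact hme ▸ hmS.1
  · rw [← Fin.coe_covBy_iff, Order.covBy_iff_add_one_eq] at h1
    simp only [hx, Fin.val_zero] at h1
    omega

lemma myRowClosed (hC : IsMaxChain (· ≤ ·) C) :
    ∀ n (h : n < c + d + 1), ((⟨n, h⟩ : Fin (c + d + 1)), (0 : Fin (b + 2))) ∈ C →
    ∀ m (hm : m ≤ n), ((⟨m, by omega⟩ : Fin (c + d + 1)), (0 : Fin (b + 2))) ∈ C := by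
  intro n
  induction n with
  | zero =>
    intro h hmem m hm
    have : m = 0 := by omega
    subst this
    exact hmem
  | succ k ih =>
    intro h hmem m hm
    rcases Nat.lt_or_ge m (k + 1) with h' | h'
    · exact ih (by omega) (myPredClosed hC h hmem) m (by omega)
    · have : m = k + 1 := by omega
      subst this
      exact hmem

lemma myKey1 (hC : IsMaxChain (· ≤ ·) C) (hcount : {x ∈ C | x.2 = 0}.ncard = c + 1) :
    ∀ i : Fin (c + d + 1), ((i, (0 : Fin (b + 2))) ∈ C ↔ (i : ℕ) ≤ c) := by
  set S : Set (Fin (c + d + 1)) := {i | (i, (0 : Fin (b + 2))) ∈ C} with hS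
  set T : Set ℕ := Fin.val '' S with hT
  have hSdc : ∀ i : Fin (c + d + 1), i ∈ S → ∀ m (hm : m ≤ (i : ℕ)),
      (⟨m, by omega⟩ : Fin (c + d + 1)) ∈ S := by
    intro i hi m hm
    have hi' : ((⟨i.1, i.2⟩ : Fin (c + d + 1)), (0 : Fin (b + 2))) ∈ C := by
      exact hi
    exact myRowClosed hC i.1 i.2 hi' m hm
  have hTdc : ∀ m n, m ≤ n → n ∈ T → m ∈ T := by
    rintro m n hmn ⟨i, hi, rfl⟩
    exact ⟨⟨m, by omega⟩, hSdc i hi m hmn, rfl⟩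
  have hinj : Function.Injective (fun i : Fin (c + d + 1) => (i, (0 : Fin (b + 2)))) :=
    fun i j h => (Prod.ext_iff.1 h).1
  have h2 : {x ∈ C | x.2 = 0} = (fun i : Fin (c + d + 1) => (i, (0 : Fin (b + 2)))) '' S := by
    ext x
    constructor
    · rintro ⟨hx, hx2⟩
      refine ⟨x.1, ?_, ?_⟩
      · show (x.1, (0 : Fin (b + 2))) ∈ C
        rwa [← hx2, Prod.mk.eta]
      · simp [← hx2]
    · rintro ⟨i, hi, rfl⟩
      exact ⟨hi, rfl⟩
  have hTcard : T.ncard = c + 1 := by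
    rw [hT, Set.ncard_image_of_injective _ Fin.val_injective]
    rw [h2, Set.ncard_image_of_injective _ hinj] at hcount
    exact hcount
  have hTeq : T = Set.Iio (c + 1) := by
    rw [← hTcard]
    exact myDownset_eq_Iio (Set.toFinite _) hTdc
  intro i
  constructor
  · intro hi
    have : (i : ℕ) ∈ T := ⟨i, hi, rfl⟩
    rw [hTeq, Set.mem_Iio] at this
    omega
  · intro hi
    have : (i : ℕ) ∈ T := by
      rw [hTeq, Set.mem_Iio]
      omega
    obtain ⟨j, hj, hji⟩ := this
    exact Fin.val_injective hji ▸ hj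

lemma myCorner (hC : IsMaxChain (· ≤ ·) C) (hcount : {x ∈ C | x.2 = 0}.ncard = c + 1) :
    ((⟨c, by omega⟩ : Fin (c + d + 1)), (1 : Fin (b + 2))) ∈ C := by
  set x : Fin (c + d + 1) × Fin (b + 2) := (⟨c, by omega⟩, 0) with hx
  have hxmem : x ∈ C := (myKey1 hC hcount ⟨c, by omega⟩).2 (by simp)
  have htop : ⊤ ∈ C := myMaxChain_top_mem hC
  have hxt : x < ⊤ := by
    refine lt_of_le_of_ne le_top ?_
    rw [myTop_eq]
    simp [hx, Prod.ext_iff, Fin.ext_iff]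
  obtain ⟨y, hyS, hymin⟩ := myChain_exists_least (s := {z ∈ C | x < z}) (Set.toFinite _)
    (hC.1.mono (Set.sep_subset _ _)) ⟨⊤, htop, hxt⟩
  have hcons : ∀ z ∈ C, ¬(x < z ∧ z < y) := by
    rintro z hz ⟨h1, h2⟩
    exact absurd (hymin z ⟨hz, h1⟩) (not_le_of_gt h2)
  have hcov : x ⋖ y := myMaxChain_covBy hC hxmem hyS.1 hyS.2 hcons
  rw [Prod.covBy_iff] at hcov
  rcases hcov with ⟨h1, h2⟩ | ⟨h1, h2⟩
  · exfalso
    rw [← Fin.coe_covBy_iff, Order.covBy_iff_add_one_eq] at h1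
    have hy0 : (y.1, (0 : Fin (b + 2))) ∈ C := by
      have : y = (y.1, (0 : Fin (b + 2))) := by
        rw [Prod.ext_iff]
        exact ⟨rfl, by simp [← h2, hx]⟩
      exact this ▸ hyS.1
    have := (myKey1 hC hcount y.1).1 hy0
    simp only [hx] at h1
    omega
  · rw [← Fin.coe_covBy_iff, Order.covBy_iff_add_one_eq] at h1
    simp only [hx, Fin.val_zero] at h1
    have hye : y = ((⟨c, by omega⟩ : Fin (c + d + 1)), (1 : Fin (b + 2))) := by
      simp only [Prod.ext_iff, Fin.ext_iff]
      exact ⟨by simp [← h2, hx], by rw [Fin.val_one]; omega⟩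
    exact hye ▸ hyS.1

lemma myUpperPart (hC : IsMaxChain (· ≤ ·) C) (hcount : {x ∈ C | x.2 = 0}.ncard = c + 1) :
    ∀ x ∈ C, x.2 ≠ 0 → c ≤ (x.1 : ℕ) ∧ 1 ≤ (x.2 : ℕ) := by
  intro x hx hx2
  set w : Fin (c + d + 1) × Fin (b + 2) := (⟨c, by omega⟩, 0) with hw
  have hwmem : w ∈ C := (myKey1 hC hcount ⟨c, by omega⟩).2 (by simp)
  have hxw : x ≠ w := by
    intro h
    exact hx2 (by rw [h])
  rcases hC.1.total hx hwmem with h | h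
  · exfalso
    apply hx2
    have : (x.2 : ℕ) = 0 := by
      have := h.2
      simp only [hw, Fin.le_def, Fin.val_zero] at this
      omega
    exact Fin.ext (by simp [this])
  · have h1 := h.1
    have h2 := h.2
    simp only [hw, Fin.le_def, Fin.val_zero] at h1 h2
    refine ⟨h1, ?_⟩
    have : (x.2 : ℕ) ≠ 0 := fun h' => hx2 (Fin.ext (by simp [h']))
    omega

end Struct

section Maps
open Set

variable {c d b : ℕ}

lemma myLe_iff' {n m : ℕ} {x y : Fin (n + 1) × Fin (m + 1)} :
    x ≤ y ↔ (x.1 : ℕ) ≤ y.1 ∧ (x.2 : ℕ) ≤ y.2 := by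
  rw [Prod.le_def, Fin.le_def, Fin.le_def]

lemma myEq_iff' {n m : ℕ} {x y : Fin (n + 1) × Fin (m + 1)} :
    x = y ↔ (x.1 : ℕ) = y.1 ∧ (x.2 : ℕ) = y.2 := by
  rw [Prod.ext_iff, Fin.ext_iff, Fin.ext_iff]

lemma myLt_iff' {n m : ℕ} {x y : Fin (n + 1) × Fin (m + 1)} :
    x < y ↔ ((x.1 : ℕ) ≤ y.1 ∧ (x.2 : ℕ) ≤ y.2 ∧ ((x.1 : ℕ) ≠ y.1 ∨ (x.2 : ℕ) ≠ y.2)) := by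
  rw [lt_iff_le_and_ne, myLe_iff', Ne, myEq_iff']
  tauto

lemma myCovBy_iff' {n m : ℕ} {x y : Fin (n + 1) × Fin (m + 1)} :
    x ⋖ y ↔ (((x.1 : ℕ) + 1 = y.1 ∧ (x.2 : ℕ) = y.2) ∨
      ((x.1 : ℕ) = y.1 ∧ (x.2 : ℕ) + 1 = y.2)) := by
  rw [Prod.covBy_iff]
  simp only [← Fin.coe_covBy_iff, Order.covBy_iff_add_one_eq, Fin.ext_iff]
  tauto

/-- the bottom row of length c+1 -/
def myBotRow (c d b : ℕ) : Set (Fin (c + d + 1) × Fin (b + 2)) :=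
  {x | (x.1 : ℕ) ≤ c ∧ x.2 = 0}

/-- backward map -/
def myG (c d b : ℕ) (D : Set (Fin (d + 1) × Fin (b + 1))) :
    Set (Fin (c + d + 1) × Fin (b + 2)) :=
  myBotRow c d b ∪ myEmb c d b '' D

lemma myForward {C : Set (Fin (c + d + 1) × Fin (b + 2))} (hC : IsMaxChain (· ≤ ·) C)
    (hcount : {x ∈ C | x.2 = 0}.ncard = c + 1) :
    IsMaxChain (· ≤ ·) (myEmb c d b ⁻¹' C) := by
  apply myIsMaxChain_of
  · intro p hp q hq hpq
    have h := hC.1 hp hq (fun h => hpq (myEmb_inj h))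
    rcases h with h | h
    · exact Or.inl (myEmb_le_iff.1 h)
    · exact Or.inr (myEmb_le_iff.1 h)
  · show myEmb c d b ⊥ ∈ C
    rw [myEmb_bot]
    exact myCorner hC hcount
  · show myEmb c d b ⊤ ∈ C
    rw [myEmb_top]
    exact myMaxChain_top_mem hC
  · intro x hx y hy hxy hcons
    rw [← myEmb_covBy_iff]
    apply myMaxChain_covBy hC hx hy (myEmb_lt_iff.2 hxy)
    rintro z hz ⟨h1, h2⟩
    have hz2 : z.2 ≠ 0 := by
      have hle := (myLt_iff'.1 h1).2.1
      simp only [myEmb] at hle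
      intro h
      rw [h] at hle
      simp only [Fin.val_zero] at hle
      omega
    obtain ⟨hz1c, hz21⟩ := myUpperPart hC hcount z hz hz2
    have hzb1 : (z.1 : ℕ) < c + d + 1 := z.1.2
    have hzb2 : (z.2 : ℕ) < b + 2 := z.2.2
    set w : Fin (d + 1) × Fin (b + 1) := (⟨(z.1 : ℕ) - c, by omega⟩, ⟨(z.2 : ℕ) - 1, by omega⟩)
      with hwdef
    have hew : myEmb c d b w = z := by
      simp only [myEmb, hwdef, Prod.ext_iff, Fin.ext_iff]
      constructor <;> omega
    have hwC : w ∈ myEmb c d b ⁻¹' C := by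
      show myEmb c d b w ∈ C
      rw [hew]
      exact hz
    refine hcons w hwC ⟨?_, ?_⟩
    · exact myEmb_lt_iff.1 (by rw [hew]; exact h1)
    · exact myEmb_lt_iff.1 (by rw [hew]; exact h2)

lemma myBackward {D : Set (Fin (d + 1) × Fin (b + 1))} (hD : IsMaxChain (· ≤ ·) D) :
    IsMaxChain (· ≤ ·) (myG c d b D) := by
  apply myIsMaxChain_of
  · -- chain
    rintro x (hx | ⟨p, hp, rfl⟩) y (hy | ⟨q, hq, rfl⟩) hne
    · rcases Nat.le_total (x.1 : ℕ) (y.1 : ℕ) with h | h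
      · exact Or.inl (myLe_iff'.2 ⟨h, by rw [hx.2, hy.2]⟩)
      · exact Or.inr (myLe_iff'.2 ⟨h, by rw [hx.2, hy.2]⟩)
    · refine Or.inl (myLe_iff'.2 ⟨?_, ?_⟩)
      · simp only [myEmb]
        have := hx.1
        omega
      · rw [hx.2]
        simp only [myEmb, Fin.val_zero]
        omega
    · refine Or.inr (myLe_iff'.2 ⟨?_, ?_⟩)
      · simp only [myEmb]
        have := hy.1
        omega
      · rw [hy.2]
        simp only [myEmb, Fin.val_zero]
        omega
    · rcases hD.1.total hp hq with h | h
      · exact Or.inl (myEmb_le_iff.2 h)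
      · exact Or.inr (myEmb_le_iff.2 h)
  · -- bot
    left
    rw [myBot_eq]
    exact ⟨by simp, by simp [Fin.ext_iff]⟩
  · -- top
    right
    exact ⟨⊤, myMaxChain_top_mem hD, myEmb_top⟩
  · -- cover
    rintro x (hx | ⟨p, hp, rfl⟩) y (hy | ⟨q, hq, rfl⟩) hxy hcons
    · -- both bottom
      rcases myLt_iff'.1 hxy with ⟨h1, h2, h3⟩
      have hne1 : (x.1 : ℕ) < (y.1 : ℕ) := by
        rcases h3 with h | h
        · omega
        · exact absurd (by rw [hx.2, hy.2]) h
      have hstep : (x.1 : ℕ) + 1 = (y.1 : ℕ) := by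
        by_contra hstep
        have hzlt : (x.1 : ℕ) + 1 < c + d + 1 := by
          have := y.1.2
          omega
        set z : Fin (c + d + 1) × Fin (b + 2) := (⟨(x.1 : ℕ) + 1, hzlt⟩, 0) with hzdef
        have hzmem : z ∈ myG c d b D := Or.inl ⟨by simp [hzdef]; have := hy.1; omega, rfl⟩
        refine hcons z hzmem ⟨?_, ?_⟩
        · rw [myLt_iff']
          simp only [hzdef, Fin.val_zero]
          rw [hx.2]
          simp only [Fin.val_zero]
          omega
        · rw [myLt_iff']
          simp only [hzdef, Fin.val_zero]
          rw [hy.2]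
          simp only [Fin.val_zero]
          omega
      rw [myCovBy_iff']
      exact Or.inl ⟨hstep, by rw [hx.2, hy.2]⟩
    · -- bottom vs emb q
      have hx2 : (x.2 : ℕ) = 0 := by rw [hx.2]; rfl
      have hclaim1 : (x.1 : ℕ) = c := by
        by_contra hne1
        have hlt : (x.1 : ℕ) < c := lt_of_le_of_ne hx.1 hne1
        set z : Fin (c + d + 1) × Fin (b + 2) := (⟨c, by omega⟩, 0) with hzdef
        have hzmem : z ∈ myG c d b D := Or.inl ⟨by simp [hzdef], rfl⟩
        refine hcons z hzmem ⟨?_, ?_⟩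
        · rw [myLt_iff']
          simp only [hzdef, Fin.val_zero]
          omega
        · rw [myLt_iff']
          simp only [hzdef, myEmb, Fin.val_zero]
          omega
      have hclaim2 : q = ⊥ := by
        by_contra hqb
        set z : Fin (c + d + 1) × Fin (b + 2) := myEmb c d b ⊥ with hzdef
        have hzmem : z ∈ myG c d b D := Or.inr ⟨⊥, myMaxChain_bot_mem hD, rfl⟩
        refine hcons z hzmem ⟨?_, ?_⟩
        · rw [myLt_iff']
          rw [hzdef, myEmb_bot]
          simp only
          omega
        · refine lt_of_le_of_ne ?_ ?_
          · rw [hzdef, myEmb_le_iff]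
            exact bot_le
          · rw [hzdef]
            exact fun h => hqb (myEmb_inj h).symm
      subst hclaim2
      rw [myCovBy_iff', myEmb_bot]
      right
      constructor
      · simpa using hclaim1
      · rw [hx2]
    · -- emb p vs bottom : impossible
      exfalso
      have := (myLt_iff'.1 hxy).2.1
      simp only [myEmb] at this
      rw [hy.2] at this
      simp only [Fin.val_zero] at this
      omega
    · -- both emb
      have hpq : p < q := myEmb_lt_iff.1 hxy
      have hcons' : ∀ z ∈ D, ¬(p < z ∧ z < q) := by
        rintro z hz ⟨h1, h2⟩
        exact hcons (myEmb c d b z) (Or.inr ⟨z, hz, rfl⟩)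
          ⟨myEmb_lt_iff.2 h1, myEmb_lt_iff.2 h2⟩
      exact myEmb_covBy_iff.2 (myMaxChain_covBy hD hp hq hpq hcons')

lemma myGcount {D : Set (Fin (d + 1) × Fin (b + 1))} (hD : IsMaxChain (· ≤ ·) D) :
    {x ∈ myG c d b D | x.2 = 0}.ncard = c + 1 := by
  have h1 : {x ∈ myG c d b D | x.2 = 0} = myBotRow c d b := by
    ext x
    constructor
    · rintro ⟨hx | ⟨q, hq, rfl⟩, hx2⟩
      · exact hx
      · exact absurd hx2 (myEmb_snd_ne_zero q)
    · intro hx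
      exact ⟨Or.inl hx, hx.2⟩
  have h2 : myBotRow c d b =
      (fun i : Fin (c + d + 1) => (i, (0 : Fin (b + 2)))) '' (Set.Iic ⟨c, by omega⟩) := by
    ext x
    constructor
    · rintro ⟨hx1, hx2⟩
      refine ⟨x.1, by simpa [Fin.le_def] using hx1, ?_⟩
      rw [← hx2]
    · rintro ⟨i, hi, rfl⟩
      exact ⟨by simpa [Fin.le_def] using hi, rfl⟩
  rw [h1, h2, Set.ncard_image_of_injective _ (fun i j h => (Prod.ext_iff.1 h).1),
    ← Finset.coe_Iic, Set.ncard_coe_finset, Fin.card_Iic]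

lemma myFG {D : Set (Fin (d + 1) × Fin (b + 1))} :
    myEmb c d b ⁻¹' (myG c d b D) = D := by
  ext q
  constructor
  · rintro (hq | ⟨p, hp, hpq⟩)
    · exact absurd hq.2 (myEmb_snd_ne_zero q)
    · rwa [myEmb_inj hpq] at hp
  · intro hq
    exact Or.inr ⟨q, hq, rfl⟩

lemma myGF {C : Set (Fin (c + d + 1) × Fin (b + 2))} (hC : IsMaxChain (· ≤ ·) C)
    (hcount : {x ∈ C | x.2 = 0}.ncard = c + 1) :
    myG c d b (myEmb c d b ⁻¹' C) = C := by
  ext x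
  constructor
  · rintro (hx | ⟨q, hq, rfl⟩)
    · have : (x.1, (0 : Fin (b + 2))) ∈ C := (myKey1 hC hcount x.1).2 hx.1
      rwa [← hx.2, Prod.mk.eta] at this
    · exact hq
  · intro hx
    by_cases hx2 : x.2 = 0
    · refine Or.inl ⟨?_, hx2⟩
      apply (myKey1 hC hcount x.1).1
      rwa [← hx2, Prod.mk.eta]
    · obtain ⟨h1, h2⟩ := myUpperPart hC hcount x hx hx2
      have hb1 : (x.1 : ℕ) < c + d + 1 := x.1.2
      have hb2 : (x.2 : ℕ) < b + 2 := x.2.2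
      refine Or.inr ⟨(⟨(x.1 : ℕ) - c, by omega⟩, ⟨(x.2 : ℕ) - 1, by omega⟩), ?_, ?_⟩
      · show myEmb c d b _ ∈ C
        have : myEmb c d b (⟨(x.1 : ℕ) - c, by omega⟩, ⟨(x.2 : ℕ) - 1, by omega⟩) = x := by
          simp only [myEmb, Prod.ext_iff, Fin.ext_iff]
          constructor <;> omega
        rwa [this]
      · simp only [myEmb, Prod.ext_iff, Fin.ext_iff]
        constructor <;> omega

end Maps

theorem card_maxChains_restricted_eq' (s t l : ℕ) (hs : 1 ≤ s) (ht : 1 ≤ t)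
    (hl1 : 1 ≤ l) (hls : l ≤ s) :
    Nat.card {C : Set (Fin s × Fin (t + 1)) //
        IsMaxChain (· ≤ ·) C ∧ {x ∈ C | x.2 = 0}.ncard = l}
      = Nat.card {C : Set (Fin (s - l + 1) × Fin t) // IsMaxChain (· ≤ ·) C} := by
  obtain ⟨b, rfl⟩ : ∃ b, t = b + 1 := ⟨t - 1, by omega⟩
  obtain ⟨c, rfl⟩ : ∃ c, l = c + 1 := ⟨l - 1, by omega⟩
  obtain ⟨d, rfl⟩ : ∃ d, s = c + d + 1 := ⟨s - c - 1, by omega⟩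
  have hst : c + d + 1 - (c + 1) + 1 = d + 1 := by omega
  rw [hst]
  exact Nat.card_congr
    { toFun := fun C => ⟨myEmb c d b ⁻¹' C.1, myForward C.2.1 C.2.2⟩
      invFun := fun D => ⟨myG c d b D.1, myBackward D.2, myGcount D.2⟩
      left_inv := fun C => Subtype.ext (myGF C.2.1 C.2.2)
      right_inv := fun D => Subtype.ext myFG }


/-- for `s, t ≥ 1` and `1 ≤ l ≤ s`, the number of maximal chains
    of `Fin s × Fin (t+1)` (componentwise order) having exactly `l` elements with
    second coordinate `0` equals the number of maximal chains of
    `Fin (s−l+1) × Fin t` (componentwise order). -/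
theorem card_maxChains_restricted_eq (s t l : ℕ) (hs : 1 ≤ s) (ht : 1 ≤ t)
    (hl1 : 1 ≤ l) (hls : l ≤ s) :
    Nat.card {C : Set (Fin s × Fin (t + 1)) //
        IsMaxChain (· ≤ ·) C ∧ {x ∈ C | x.2 = 0}.ncard = l}
      = Nat.card {C : Set (Fin (s - l + 1) × Fin t) // IsMaxChain (· ≤ ·) C} :=
  card_maxChains_restricted_eq' s t l hs ht hl1 hls
end
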